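/- arXiv:2305.12663 — 2 statements merged into one kernel-verified Lean document; each statement's English description precedes it below -/
import Mathlib

section
/- If a nonnegative function d : S × A → ℝ satisfies the Bellman flow constraint Σ_a d(s,a) = (1-γ) μ₀(s) + γ Σ_{s̃,ã} T(s | s̃, ã) d(s̃, ã) for all s, then d equals the state-action occupancy d^π of the policy π defined by π(a|s) = d(s,a)/Σ_{a'} d(s,a') wherever Σ_{a'} d(s,a') > 0. -/
open scoped BigOperators

/-- Distribution over states at time `t` for the Markov chain induced by policy `π`
and transition kernel `T`, started from `μ₀`. -/
noncomputable def stateDist {S A : Type*} [Fintype S] [Fintype A]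
    (μ₀ : S → ℝ) (T : S → A → S → ℝ) (π : S → A → ℝ) : ℕ → S → ℝ
  | 0 => μ₀
  | t + 1 => fun s' => ∑ s : S, ∑ a : A, stateDist μ₀ T π t s * π s a * T s a s'

/-- Discounted state-action occupancy `d^π(s,a) = (1-γ) ∑_t γ^t Pr(s_t = s, a_t = a)`. -/
noncomputable def occ {S A : Type*} [Fintype S] [Fintype A]
    (γ : ℝ) (μ₀ : S → ℝ) (T : S → A → S → ℝ) (π : S → A → ℝ) (s : S) (a : A) : ℝ :=
  (1 - γ) * ∑' t : ℕ, γ ^ t * (stateDist μ₀ T π t s * π s a)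

/-- One-step transition operator on state distributions. -/
noncomputable def Pker {S A : Type*} [Fintype S] [Fintype A]
    (T : S → A → S → ℝ) (π : S → A → ℝ) (f : S → ℝ) (s' : S) : ℝ :=
  ∑ s : S, ∑ a : A, f s * π s a * T s a s'

/-- A nonnegative solution of the Bellman flow constraint is the occupancy of the
policy obtained by normalizing it. -/
theorem flow_feasible_eq_occ {S A : Type*} [Fintype S] [Fintype A]
    (γ : ℝ) (μ₀ : S → ℝ) (T : S → A → S → ℝ) (π : S → A → ℝ) (d : S → A → ℝ)
    (hγ0 : 0 < γ) (hγ1 : γ < 1)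
    (hμ0 : ∀ s, 0 ≤ μ₀ s) (hμsum : ∑ s : S, μ₀ s = 1)
    (hT0 : ∀ s a s', 0 ≤ T s a s') (hTsum : ∀ s a, ∑ s' : S, T s a s' = 1)
    (hπ0 : ∀ s a, 0 ≤ π s a) (hπsum : ∀ s, ∑ a : A, π s a = 1)
    (hd0 : ∀ s a, 0 ≤ d s a)
    (hflow : ∀ s : S, (∑ a : A, d s a) =
      (1 - γ) * μ₀ s + γ * ∑ st : S, ∑ at' : A, T st at' s * d st at')
    (hπd : ∀ s a, 0 < (∑ a' : A, d s a') → π s a = d s a / (∑ a' : A, d s a')) :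
    ∀ s : S, ∀ a : A, occ γ μ₀ T π s a = d s a := by
  classical
  have hγne : (1 : ℝ) - γ ≠ 0 := by linarith
  set ν : ℕ → S → ℝ := stateDist μ₀ T π with hν
  have hν0eq : ν 0 = μ₀ := rfl
  have hνsucc : ∀ t, ν (t + 1) = Pker T π (ν t) := fun t => rfl
  -- d factors through its state marginal
  have hρ0 : ∀ s, 0 ≤ ∑ a : A, d s a := fun s => Finset.sum_nonneg fun a _ => hd0 s a
  have hdρπ : ∀ s a, d s a = (∑ a' : A, d s a') * π s a := by
    intro s a
    rcases (hρ0 s).lt_or_eq with h | h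
    · rw [hπd s a h]; field_simp
    · have hz : d s a = 0 :=
        (Finset.sum_eq_zero_iff_of_nonneg (fun a' _ => hd0 s a')).mp h.symm a (Finset.mem_univ a)
      rw [hz, ← h, zero_mul]
  -- basic facts about Pker
  have hPnonneg : ∀ f : S → ℝ, (∀ s, 0 ≤ f s) → ∀ s', 0 ≤ Pker T π f s' := by
    intro f hf s'
    refine Finset.sum_nonneg fun s _ => Finset.sum_nonneg fun a _ => ?_
    exact mul_nonneg (mul_nonneg (hf s) (hπ0 s a)) (hT0 s a s')
  have hPsum : ∀ f : S → ℝ, (∑ s' : S, Pker T π f s') = ∑ s : S, f s := by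
    intro f
    calc (∑ s' : S, Pker T π f s')
        = ∑ s : S, ∑ a : A, f s * π s a * ∑ s' : S, T s a s' := by
          simp only [Pker, Finset.mul_sum]
          rw [Finset.sum_comm]
          exact Finset.sum_congr rfl fun s _ => Finset.sum_comm
      _ = ∑ s : S, f s := by
          simp only [hTsum, mul_one]
          simp [← Finset.mul_sum, hπsum]
  -- the flow constraint in operator form
  have hflowP : ∀ s, (∑ a : A, d s a)
      = (1 - γ) * μ₀ s + γ * Pker T π (fun s => ∑ a : A, d s a) s := by
    intro s
    rw [hflow s]
    congr 2
    simp only [Pker]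
    refine Finset.sum_congr rfl fun st _ => Finset.sum_congr rfl fun at' _ => ?_
    rw [← hdρπ st at', mul_comm]
  have hPlin : ∀ (c₁ c₂ : ℝ) (f g : S → ℝ) (s' : S),
      Pker T π (fun s => c₁ * f s + c₂ * g s) s'
        = c₁ * Pker T π f s' + c₂ * Pker T π g s' := by
    intro c₁ c₂ f g s'
    simp only [Pker, Finset.mul_sum, ← Finset.sum_add_distrib]
    refine Finset.sum_congr rfl fun st _ => Finset.sum_congr rfl fun a _ => ?_
    ring
  -- iterates of the transition operator applied to the marginal of d
  set r : ℕ → S → ℝ := fun n => (Pker T π)^[n] (fun s => ∑ a : A, d s a) with hr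
  have hr0 : r 0 = fun s => ∑ a : A, d s a := rfl
  have hrsucc : ∀ n, r (n + 1) = Pker T π (r n) := by
    intro n
    simp only [hr]
    exact Function.iterate_succ_apply' _ _ _
  -- claim A: the flow identity propagates through iterates
  have hA : ∀ n s, r n s = (1 - γ) * ν n s + γ * r (n + 1) s := by
    intro n
    induction n with
    | zero =>
      intro s
      rw [hrsucc 0, hr0, hν0eq]
      exact hflowP s
    | succ n ih =>
      intro s
      have hfun : r n = fun s => (1 - γ) * ν n s + γ * r (n + 1) s := funext ih
      calc r (n + 1) s = Pker T π (r n) s := by rw [hrsucc n]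
        _ = Pker T π (fun s => (1 - γ) * ν n s + γ * r (n + 1) s) s := by rw [hfun]
        _ = (1 - γ) * Pker T π (ν n) s + γ * Pker T π (r (n + 1)) s :=
            hPlin (1 - γ) γ (ν n) (r (n + 1)) s
        _ = (1 - γ) * ν (n + 1) s + γ * r (n + 1 + 1) s := by
            rw [hνsucc n, hrsucc (n + 1)]
  -- total mass of d is 1
  have hρsum : (∑ s : S, ∑ a : A, d s a) = 1 := by
    have h : (∑ s : S, ∑ a : A, d s a)
        = (1 - γ) * 1 + γ * ∑ s : S, ∑ a : A, d s a := by
      calc (∑ s : S, ∑ a : A, d s a)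
          = ∑ s : S, ((1 - γ) * μ₀ s + γ * ∑ st : S, ∑ at' : A, T st at' s * d st at') :=
            Finset.sum_congr rfl fun s _ => hflow s
        _ = (1 - γ) * (∑ s : S, μ₀ s)
            + γ * ∑ s : S, ∑ st : S, ∑ at' : A, T st at' s * d st at' := by
            rw [Finset.sum_add_distrib, Finset.mul_sum, Finset.mul_sum]
        _ = (1 - γ) * 1 + γ * ∑ st : S, ∑ at' : A, (∑ s : S, T st at' s) * d st at' := by
            rw [hμsum]
            congr 2
            rw [Finset.sum_comm]
            refine Finset.sum_congr rfl fun st _ => ?_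
            rw [Finset.sum_comm]
            exact Finset.sum_congr rfl fun at' _ => (Finset.sum_mul _ _ _).symm
        _ = (1 - γ) * 1 + γ * ∑ st : S, ∑ at' : A, d st at' := by simp [hTsum]
    have h2 : (1 - γ) * (∑ s : S, ∑ a : A, d s a) = (1 - γ) * 1 := by linear_combination h
    exact mul_left_cancel₀ hγne h2
  -- iterates are nonnegative, sum to one, hence bounded by 1
  have hrnn : ∀ n s, 0 ≤ r n s := by
    intro n
    induction n with
    | zero => intro s; rw [hr0]; exact hρ0 s
    | succ n ih => intro s; rw [hrsucc n]; exact hPnonneg _ ih s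
  have hrsum : ∀ n, (∑ s : S, r n s) = 1 := by
    intro n
    induction n with
    | zero => rw [hr0]; exact hρsum
    | succ n ih => rw [hrsucc n, hPsum, ih]
  have hrle : ∀ n s, r n s ≤ 1 := by
    intro n s
    rw [← hrsum n]
    exact Finset.single_le_sum (fun i _ => hrnn n i) (Finset.mem_univ s)
  -- state distributions are nonnegative
  have hνnn : ∀ t s, 0 ≤ ν t s := by
    intro t
    induction t with
    | zero => intro s; rw [hν0eq]; exact hμ0 s
    | succ t ih => intro s; rw [hνsucc t]; exact hPnonneg _ ih s
  -- partial-sum identity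
  have hC : ∀ n s, (∑ a : A, d s a)
      = (∑ t ∈ Finset.range n, (1 - γ) * γ ^ t * ν t s) + γ ^ n * r n s := by
    intro n
    induction n with
    | zero =>
      intro s
      simp only [Finset.range_zero, Finset.sum_empty, pow_zero, one_mul, zero_add, hr0]
    | succ n ih =>
      intro s
      rw [Finset.sum_range_succ, ih s, hA n s]
      ring
  -- summability
  have hhs : ∀ s : S, HasSum (fun t => (1 - γ) * γ ^ t * ν t s) (∑ a : A, d s a) := by
    intro s
    rw [hasSum_iff_tendsto_nat_of_nonneg]
    · have h1 : ∀ n, (∑ t ∈ Finset.range n, (1 - γ) * γ ^ t * ν t s)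
          = (∑ a : A, d s a) - γ ^ n * r n s := fun n => by rw [hC n s]; ring
      simp only [h1]
      have h2 : Filter.Tendsto (fun n : ℕ => γ ^ n * r n s) Filter.atTop (nhds 0) := by
        refine squeeze_zero_norm (fun n => ?_)
          (tendsto_pow_atTop_nhds_zero_of_lt_one hγ0.le hγ1)
        rw [Real.norm_eq_abs, abs_of_nonneg (mul_nonneg (pow_nonneg hγ0.le n) (hrnn n s))]
        exact mul_le_of_le_one_right (pow_nonneg hγ0.le n) (hrle n s)
      have h3 := Filter.Tendsto.const_sub (∑ a : A, d s a) h2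
      simpa using h3
    · intro t
      exact mul_nonneg (mul_nonneg (by linarith) (pow_nonneg hγ0.le t)) (hνnn t s)
  -- conclude
  intro s a
  have h1 : HasSum (fun t => γ ^ t * (ν t s * π s a))
      ((1 - γ)⁻¹ * ((∑ a' : A, d s a') * π s a)) := by
    have h3 := ((hhs s).mul_right (π s a)).mul_left (1 - γ)⁻¹
    convert h3 using 1
    · rfl
    funext t
    field_simp
  show (1 - γ) * ∑' t : ℕ, γ ^ t * (ν t s * π s a) = d s a
  rw [h1.tsum_eq, ← mul_assoc, mul_inv_cancel₀ hγne, one_mul, ← hdρπ s a]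
end

section
/- Strong duality for occupancy LPs: for a finite MDP, the maximum of (1/(1-γ)) Σ_{s,a} d(s,a) R(s,a) over nonnegative d satisfying the Bellman flow constraint Σ_a d(s,a) = (1-γ)μ₀(s) + γ Σ_{s̃,ã} T(s|s̃,ã) d(s̃,ã) for all s equals the maximum over policies π of the discounted return J(π). -/
open scoped BigOperators

section Aux
variable {S A : Type*} [Fintype S] [Fintype A]
variable {γ : ℝ} {μ₀ : S → ℝ} {T : S → A → S → ℝ} {π : S → A → ℝ}

lemma stateDist_nonneg (hμ0 : ∀ s, 0 ≤ μ₀ s) (hT0 : ∀ s a s', 0 ≤ T s a s')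
    (hπ0 : ∀ s a, 0 ≤ π s a) : ∀ t s, 0 ≤ stateDist μ₀ T π t s := by
  intro t
  induction t with
  | zero => exact hμ0
  | succ t ih =>
    intro s'
    apply Finset.sum_nonneg; intro s _
    apply Finset.sum_nonneg; intro a _
    exact mul_nonneg (mul_nonneg (ih s) (hπ0 s a)) (hT0 s a s')

lemma stateDist_sum_one (hμsum : ∑ s : S, μ₀ s = 1) (hTsum : ∀ s a, ∑ s' : S, T s a s' = 1)
    (hπ1 : ∀ s, ∑ a : A, π s a = 1) : ∀ t, ∑ s : S, stateDist μ₀ T π t s = 1 := by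
  intro t
  induction t with
  | zero => exact hμsum
  | succ t ih =>
    show ∑ s' : S, ∑ s : S, ∑ a : A, stateDist μ₀ T π t s * π s a * T s a s' = 1
    rw [Finset.sum_comm]
    have : ∀ s : S, ∑ s' : S, ∑ a : A, stateDist μ₀ T π t s * π s a * T s a s'
        = stateDist μ₀ T π t s := by
      intro s
      rw [Finset.sum_comm]
      calc ∑ a : A, ∑ s' : S, stateDist μ₀ T π t s * π s a * T s a s'
          = ∑ a : A, stateDist μ₀ T π t s * π s a * ∑ s' : S, T s a s' := by
            simp [Finset.mul_sum]
        _ = stateDist μ₀ T π t s := by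
            simp only [hTsum, mul_one, ← Finset.mul_sum, hπ1]
    simp only [this, ih]

lemma stateDist_le_one (hμ0 : ∀ s, 0 ≤ μ₀ s) (hμsum : ∑ s : S, μ₀ s = 1)
    (hT0 : ∀ s a s', 0 ≤ T s a s') (hTsum : ∀ s a, ∑ s' : S, T s a s' = 1)
    (hπ0 : ∀ s a, 0 ≤ π s a) (hπ1 : ∀ s, ∑ a : A, π s a = 1) :
    ∀ t s, stateDist μ₀ T π t s ≤ 1 := by
  intro t s
  rw [← stateDist_sum_one hμsum hTsum hπ1 t]
  exact Finset.single_le_sum (fun i _ => stateDist_nonneg hμ0 hT0 hπ0 t i) (Finset.mem_univ s)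

lemma summable_geo_bdd (hγ0 : 0 ≤ γ) (hγ1 : γ < 1) {f : ℕ → ℝ} {C : ℝ}
    (hf : ∀ t, |f t| ≤ C) : Summable (fun t => γ ^ t * f t) := by
  apply Summable.of_norm_bounded
    ((summable_geometric_of_lt_one hγ0 hγ1).mul_right C)
  intro t
  rw [Real.norm_eq_abs, abs_mul, abs_pow, abs_of_nonneg hγ0]
  exact mul_le_mul_of_nonneg_left (hf t) (pow_nonneg hγ0 t)

end Aux

section Aux2
variable {S A : Type*} [Fintype S] [Fintype A]
variable {γ : ℝ} {μ₀ : S → ℝ} {T : S → A → S → ℝ} {π : S → A → ℝ}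

lemma summable_occ (hγ0 : 0 ≤ γ) (hγ1 : γ < 1)
    (hμ0 : ∀ s, 0 ≤ μ₀ s) (hμsum : ∑ s : S, μ₀ s = 1)
    (hT0 : ∀ s a s', 0 ≤ T s a s') (hTsum : ∀ s a, ∑ s' : S, T s a s' = 1)
    (hπ0 : ∀ s a, 0 ≤ π s a) (hπ1 : ∀ s, ∑ a : A, π s a = 1) (g : S → A → ℝ) (s : S) (a : A) :
    Summable (fun t => γ ^ t * (stateDist μ₀ T π t s * π s a * g s a)) := by
  apply summable_geo_bdd hγ0 hγ1 (C := |g s a|)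
  intro t
  have h1 : 0 ≤ stateDist μ₀ T π t s := stateDist_nonneg hμ0 hT0 hπ0 t s
  have h2 : stateDist μ₀ T π t s ≤ 1 := stateDist_le_one hμ0 hμsum hT0 hTsum hπ0 hπ1 t s
  have h3 : π s a ≤ 1 := by
    rw [← hπ1 s]
    exact Finset.single_le_sum (fun i _ => hπ0 s i) (Finset.mem_univ a)
  rw [abs_mul, abs_mul, abs_of_nonneg h1, abs_of_nonneg (hπ0 s a)]
  have hp1 : stateDist μ₀ T π t s * π s a ≤ 1 := mul_le_one₀ h2 (hπ0 s a) h3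
  exact mul_le_of_le_one_left (abs_nonneg _) hp1

lemma summable_p (hγ0 : 0 ≤ γ) (hγ1 : γ < 1)
    (hμ0 : ∀ s, 0 ≤ μ₀ s) (hμsum : ∑ s : S, μ₀ s = 1)
    (hT0 : ∀ s a s', 0 ≤ T s a s') (hTsum : ∀ s a, ∑ s' : S, T s a s' = 1)
    (hπ0 : ∀ s a, 0 ≤ π s a) (hπ1 : ∀ s, ∑ a : A, π s a = 1) (s : S) :
    Summable (fun t => γ ^ t * stateDist μ₀ T π t s) := by
  apply summable_geo_bdd hγ0 hγ1 (C := 1)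
  intro t
  rw [abs_of_nonneg (stateDist_nonneg hμ0 hT0 hπ0 t s)]
  exact stateDist_le_one hμ0 hμsum hT0 hTsum hπ0 hπ1 t s

lemma occ_eq_q_mul (s : S) (a : A) :
    occ γ μ₀ T π s a = ((1 - γ) * ∑' t : ℕ, γ ^ t * stateDist μ₀ T π t s) * π s a := by
  simp only [occ]
  rw [mul_assoc, ← tsum_mul_right]
  congr 1
  exact tsum_congr fun t => by ring

end Aux2

section Aux3
variable {S A : Type*} [Fintype S] [Fintype A]
variable {γ : ℝ} {μ₀ : S → ℝ} {T : S → A → S → ℝ} {π : S → A → ℝ}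

lemma swap_lemma (g : S → A → ℕ → ℝ) (hsum : ∀ s a, Summable fun t => γ ^ t * g s a t) :
    ∑ s : S, ∑ a : A, ∑' t : ℕ, γ ^ t * g s a t
      = ∑' t : ℕ, γ ^ t * ∑ s : S, ∑ a : A, g s a t := by
  calc ∑ s : S, ∑ a : A, ∑' t : ℕ, γ ^ t * g s a t
      = ∑ s : S, ∑' t : ℕ, ∑ a : A, γ ^ t * g s a t := by
        refine Finset.sum_congr rfl fun s _ => (Summable.tsum_finsetSum (fun a _ => hsum s a)).symm
    _ = ∑' t : ℕ, ∑ s : S, ∑ a : A, γ ^ t * g s a t :=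
        (Summable.tsum_finsetSum fun s _ => summable_sum (fun a _ => hsum s a)).symm
    _ = ∑' t : ℕ, γ ^ t * ∑ s : S, ∑ a : A, g s a t := by
        refine tsum_congr fun t => ?_
        simp [Finset.mul_sum]

lemma occ_flow (hγ0 : 0 ≤ γ) (hγ1 : γ < 1)
    (hμ0 : ∀ s, 0 ≤ μ₀ s) (hμsum : ∑ s : S, μ₀ s = 1)
    (hT0 : ∀ s a s', 0 ≤ T s a s') (hTsum : ∀ s a, ∑ s' : S, T s a s' = 1)
    (hπ0 : ∀ s a, 0 ≤ π s a) (hπ1 : ∀ s, ∑ a : A, π s a = 1) (s : S) :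
    ∑ a : A, occ γ μ₀ T π s a
      = (1 - γ) * μ₀ s + γ * ∑ st : S, ∑ at' : A, T st at' s * occ γ μ₀ T π st at' := by
  have hocc : ∀ st at', T st at' s * occ γ μ₀ T π st at'
      = (1 - γ) * ∑' t : ℕ, γ ^ t * (stateDist μ₀ T π t st * π st at' * T st at' s) := by
    intro st at'
    calc T st at' s * occ γ μ₀ T π st at'
        = (1 - γ) * ((∑' t : ℕ, γ ^ t * (stateDist μ₀ T π t st * π st at')) * T st at' s) := by
          simp only [occ]; ring
      _ = (1 - γ) * ∑' t : ℕ, γ ^ t * (stateDist μ₀ T π t st * π st at' * T st at' s) := by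
          rw [← tsum_mul_right]
          exact congrArg _ (tsum_congr fun t => by ring)
  have hswap : ∑ st : S, ∑ at' : A, T st at' s * occ γ μ₀ T π st at'
      = (1 - γ) * ∑' t : ℕ, γ ^ t * stateDist μ₀ T π (t + 1) s := by
    simp only [hocc, ← Finset.mul_sum]
    congr 1
    rw [swap_lemma (fun st at' t => stateDist μ₀ T π t st * π st at' * T st at' s)
      (fun st at' => summable_occ hγ0 hγ1 hμ0 hμsum hT0 hTsum hπ0 hπ1
        (fun st at' => T st at' s) st at')]
    exact tsum_congr fun t => rfl
  have hlhs : ∑ a : A, occ γ μ₀ T π s a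
      = (1 - γ) * ∑' t : ℕ, γ ^ t * stateDist μ₀ T π t s := by
    simp only [occ_eq_q_mul, ← Finset.mul_sum, hπ1, mul_one]
  rw [hlhs, hswap]
  have hshift := Summable.tsum_eq_zero_add (summable_p hγ0 hγ1 hμ0 hμsum hT0 hTsum hπ0 hπ1 s)
  rw [hshift]
  have : ∑' t : ℕ, γ ^ (t + 1) * stateDist μ₀ T π (t + 1) s
      = γ * ∑' t : ℕ, γ ^ t * stateDist μ₀ T π (t + 1) s := by
    rw [← tsum_mul_left]
    exact tsum_congr fun t => by ring
  rw [this]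
  simp only [pow_zero, stateDist]
  ring

lemma occ_value (hγ0 : 0 ≤ γ) (hγ1 : γ < 1)
    (hμ0 : ∀ s, 0 ≤ μ₀ s) (hμsum : ∑ s : S, μ₀ s = 1)
    (hT0 : ∀ s a s', 0 ≤ T s a s') (hTsum : ∀ s a, ∑ s' : S, T s a s' = 1)
    (hπ0 : ∀ s a, 0 ≤ π s a) (hπ1 : ∀ s, ∑ a : A, π s a = 1) (R : S → A → ℝ) :
    ∑ s : S, ∑ a : A, occ γ μ₀ T π s a * R s a
      = (1 - γ) * ∑' t : ℕ, γ ^ t * ∑ s : S, ∑ a : A, stateDist μ₀ T π t s * π s a * R s a := by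
  have hocc : ∀ s a, occ γ μ₀ T π s a * R s a
      = (1 - γ) * ∑' t : ℕ, γ ^ t * (stateDist μ₀ T π t s * π s a * R s a) := by
    intro s a
    calc occ γ μ₀ T π s a * R s a
        = (1 - γ) * ((∑' t : ℕ, γ ^ t * (stateDist μ₀ T π t s * π s a)) * R s a) := by
          simp only [occ]; ring
      _ = (1 - γ) * ∑' t : ℕ, γ ^ t * (stateDist μ₀ T π t s * π s a * R s a) := by
          rw [← tsum_mul_right]
          exact congrArg _ (tsum_congr fun t => by ring)
  simp only [hocc, ← Finset.mul_sum]
  congr 1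
  exact swap_lemma _ (fun s a => summable_occ hγ0 hγ1 hμ0 hμsum hT0 hTsum hπ0 hπ1 R s a)

end Aux3

lemma flow_unique {S : Type*} [Fintype S] {γ : ℝ} (hγ0 : 0 ≤ γ) (hγ1 : γ < 1)
    (c : S → ℝ) (P : S → S → ℝ) (hP0 : ∀ s s', 0 ≤ P s s') (hP1 : ∀ s, ∑ s' : S, P s s' = 1)
    (x y : S → ℝ) (hx : ∀ s, x s = c s + γ * ∑ st : S, x st * P st s)
    (hy : ∀ s, y s = c s + γ * ∑ st : S, y st * P st s) : x = y := by
  have he : ∀ s, x s - y s = γ * ∑ st : S, (x st - y st) * P st s := by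
    intro s
    have h : ∑ st : S, (x st - y st) * P st s
        = ∑ st : S, x st * P st s - ∑ st : S, y st * P st s := by
      rw [← Finset.sum_sub_distrib]
      exact Finset.sum_congr rfl fun st _ => sub_mul _ _ _
    rw [hx s, hy s, h]; ring
  have hbound : ∑ s : S, |x s - y s| ≤ γ * ∑ s : S, |x s - y s| := by
    calc ∑ s : S, |x s - y s| = ∑ s : S, γ * |∑ st : S, (x st - y st) * P st s| := by
          refine Finset.sum_congr rfl fun s _ => ?_
          rw [he s, abs_mul, abs_of_nonneg hγ0]
      _ ≤ ∑ s : S, γ * ∑ st : S, |x st - y st| * P st s := by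
          refine Finset.sum_le_sum fun s _ => ?_
          refine mul_le_mul_of_nonneg_left ?_ hγ0
          refine (Finset.abs_sum_le_sum_abs _ _).trans ?_
          refine le_of_eq (Finset.sum_congr rfl fun st _ => ?_)
          rw [abs_mul, abs_of_nonneg (hP0 st s)]
      _ = γ * ∑ st : S, |x st - y st| * ∑ s : S, P st s := by
          rw [← Finset.mul_sum, Finset.sum_comm]
          congr 1
          exact Finset.sum_congr rfl fun st _ => (Finset.mul_sum _ _ _).symm
      _ = γ * ∑ st : S, |x st - y st| := by simp [hP1]
  have hnn : 0 ≤ ∑ s : S, |x s - y s| := Finset.sum_nonneg fun s _ => abs_nonneg _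
  have hz : ∑ s : S, |x s - y s| = 0 := by nlinarith
  funext s
  have := (Finset.sum_eq_zero_iff_of_nonneg (fun s _ => abs_nonneg (x s - y s))).1 hz s
    (Finset.mem_univ s)
  have := abs_eq_zero.1 this
  linarith [sub_eq_zero.1 this]

/-- Strong duality for occupancy LPs: the optimal value of the Bellman-flow LP equals
the optimal discounted return over policies. -/
theorem occupancy_lp_strong_duality {S A : Type*} [Fintype S] [Fintype A]
    (γ : ℝ) (μ₀ : S → ℝ) (T : S → A → S → ℝ) (R : S → A → ℝ)
    (hγ0 : 0 < γ) (hγ1 : γ < 1)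
    (hμ0 : ∀ s, 0 ≤ μ₀ s) (hμsum : ∑ s : S, μ₀ s = 1)
    (hT0 : ∀ s a s', 0 ≤ T s a s') (hTsum : ∀ s a, ∑ s' : S, T s a s' = 1) :
    sSup {r : ℝ | ∃ d : S → A → ℝ, (∀ s a, 0 ≤ d s a) ∧
        (∀ s : S, (∑ a : A, d s a) =
          (1 - γ) * μ₀ s + γ * ∑ st : S, ∑ at' : A, T st at' s * d st at') ∧
        r = (1 / (1 - γ)) * ∑ s : S, ∑ a : A, d s a * R s a} =
      sSup {r : ℝ | ∃ π : S → A → ℝ, (∀ s a, 0 ≤ π s a) ∧ (∀ s, ∑ a : A, π s a = 1) ∧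
        r = ∑' t : ℕ, γ ^ t *
          ∑ s : S, ∑ a : A, stateDist μ₀ T π t s * π s a * R s a} := by
  have hγ0' : (0:ℝ) ≤ γ := le_of_lt hγ0
  have h1γ : (0:ℝ) < 1 - γ := by linarith
  congr 1
  ext r
  simp only [Set.mem_setOf_eq]
  constructor
  · rintro ⟨d, hd0, hdflow, hr⟩
    -- total mass is 1
    have hswapT : ∑ s : S, ∑ st : S, ∑ at' : A, T st at' s * d st at'
        = ∑ st : S, ∑ at' : A, d st at' := by
      rw [Finset.sum_comm]
      refine Finset.sum_congr rfl fun st _ => ?_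
      rw [Finset.sum_comm]
      refine Finset.sum_congr rfl fun at' _ => ?_
      rw [← Finset.sum_mul, hTsum, one_mul]
    have hMeq : ∑ st : S, ∑ at' : A, d st at'
        = (1 - γ) + γ * ∑ st : S, ∑ at' : A, d st at' := by
      calc ∑ st : S, ∑ at' : A, d st at'
          = ∑ s : S, ((1 - γ) * μ₀ s + γ * ∑ st : S, ∑ at' : A, T st at' s * d st at') :=
            Finset.sum_congr rfl fun s _ => hdflow s
        _ = (1 - γ) * ∑ s : S, μ₀ s
            + γ * ∑ s : S, ∑ st : S, ∑ at' : A, T st at' s * d st at' := by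
            rw [Finset.sum_add_distrib, ← Finset.mul_sum, ← Finset.mul_sum]
        _ = (1 - γ) + γ * ∑ st : S, ∑ at' : A, d st at' := by rw [hμsum, hswapT, mul_one]
    have hM : ∑ st : S, ∑ at' : A, d st at' = 1 := by
      have h2 : (1 - γ) * ((∑ st : S, ∑ at' : A, d st at') - 1) = 0 := by
        linear_combination hMeq
      rcases mul_eq_zero.1 h2 with h | h
      · exact absurd h (ne_of_gt h1γ)
      · linarith [sub_eq_zero.1 h]
    haveI hA : Nonempty A := by
      by_contra h
      rw [not_nonempty_iff] at h
      simp at hM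
    -- extract policy
    set π : S → A → ℝ := fun s a =>
      if (∑ b : A, d s b) = 0 then (Fintype.card A : ℝ)⁻¹ else d s a / (∑ b : A, d s b)
      with hπdef
    have hπ0 : ∀ s a, 0 ≤ π s a := by
      intro s a
      rw [hπdef]
      by_cases h : (∑ b : A, d s b) = 0
      · simp only [if_pos h]
        positivity
      · simp only [if_neg h]
        exact div_nonneg (hd0 s a) (Finset.sum_nonneg fun b _ => hd0 s b)
    have hπ1 : ∀ s, ∑ a : A, π s a = 1 := by
      intro s
      rw [hπdef]
      by_cases h : (∑ b : A, d s b) = 0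
      · simp only [if_pos h]
        rw [Finset.sum_const, Finset.card_univ, nsmul_eq_mul]
        exact mul_inv_cancel₀ (by exact_mod_cast Fintype.card_ne_zero)
      · simp only [if_neg h]
        rw [← Finset.sum_div]
        exact div_self h
    have hd_eq : ∀ s a, d s a = (∑ b : A, d s b) * π s a := by
      intro s a
      rw [hπdef]
      by_cases h : (∑ b : A, d s b) = 0
      · have : d s a = 0 :=
          (Finset.sum_eq_zero_iff_of_nonneg (fun b _ => hd0 s b)).1 h a (Finset.mem_univ a)
        rw [this, h, zero_mul]
      · simp only [if_neg h]
        rw [mul_comm, div_mul_cancel₀ _ h]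
    -- occupancies of π agree with d
    have hoccsum : ∀ st, ∑ a : A, occ γ μ₀ T π st a
        = (1 - γ) * ∑' t : ℕ, γ ^ t * stateDist μ₀ T π t st := by
      intro st
      simp only [occ_eq_q_mul, ← Finset.mul_sum, hπ1, mul_one]
    have hoccy : ∀ st at', occ γ μ₀ T π st at' = (∑ a : A, occ γ μ₀ T π st a) * π st at' := by
      intro st at'
      rw [occ_eq_q_mul, hoccsum]
    have hxy : (fun s => ∑ a : A, d s a) = (fun s => ∑ a : A, occ γ μ₀ T π s a) := by
      refine flow_unique hγ0' hγ1 (fun s => (1 - γ) * μ₀ s)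
        (fun st s => ∑ at' : A, π st at' * T st at' s)
        (fun st s => Finset.sum_nonneg fun at' _ => mul_nonneg (hπ0 st at') (hT0 st at' s))
        (fun st => by
          rw [Finset.sum_comm]
          calc ∑ at' : A, ∑ s : S, π st at' * T st at' s
              = ∑ at' : A, π st at' * ∑ s : S, T st at' s := by
                refine Finset.sum_congr rfl fun at' _ => (Finset.mul_sum _ _ _).symm
            _ = 1 := by simp only [hTsum, mul_one, hπ1]) _ _ ?_ ?_
      · intro s
        rw [hdflow s]
        congr 2
        refine Finset.sum_congr rfl fun st _ => ?_
        rw [Finset.mul_sum]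
        refine Finset.sum_congr rfl fun at' _ => ?_
        rw [hd_eq st at']; ring
      · intro s
        rw [occ_flow hγ0' hγ1 hμ0 hμsum hT0 hTsum hπ0 hπ1 s]
        congr 2
        refine Finset.sum_congr rfl fun st _ => ?_
        rw [Finset.mul_sum]
        refine Finset.sum_congr rfl fun at' _ => ?_
        rw [hoccy st at']; ring
    refine ⟨π, hπ0, hπ1, ?_⟩
    have hdo : ∀ s a, d s a = occ γ μ₀ T π s a := by
      intro s a
      rw [hd_eq s a, congrFun hxy s, ← hoccy]
    have hv := occ_value hγ0' hγ1 hμ0 hμsum hT0 hTsum hπ0 hπ1 R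
    rw [hr]
    have hsum_eq : ∑ s : S, ∑ a : A, d s a * R s a
        = ∑ s : S, ∑ a : A, occ γ μ₀ T π s a * R s a :=
      Finset.sum_congr rfl fun s _ => Finset.sum_congr rfl fun a _ => by rw [hdo]
    rw [hsum_eq, hv, one_div, inv_mul_cancel_left₀ (ne_of_gt h1γ)]
  · rintro ⟨π, hπ0, hπ1, hr⟩
    refine ⟨occ γ μ₀ T π, ?_, occ_flow hγ0' hγ1 hμ0 hμsum hT0 hTsum hπ0 hπ1, ?_⟩
    · intro s a
      refine mul_nonneg (by linarith) (tsum_nonneg fun t => ?_)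
      exact mul_nonneg (pow_nonneg hγ0' t)
        (mul_nonneg (stateDist_nonneg hμ0 hT0 hπ0 t s) (hπ0 s a))
    · rw [occ_value hγ0' hγ1 hμ0 hμsum hT0 hTsum hπ0 hπ1 R, hr, one_div,
        inv_mul_cancel_left₀ (ne_of_gt h1γ)]
end
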